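/- Explicit lower bound on the Lyapunov matrix Ψ̄ (Appendix Lemma 3). Let H be a real symmetric m×m matrix with H ⪰ m̲·I for some m̲ > 0, and let k > 0 and k_p ≥ 2k/m̲. Then the 2m×2m block matrix Ψ̄ = [[H − (k/k_p)·I, H − m̲·I], [H − m̲·I, H]] satisfies Ψ̄ ⪰ (m̲/8)·I_{2m}, i.e., vᵀ Ψ̄ v ≥ (m̲/8)‖v‖² for all v ∈ ℝ^{2m}. -/

import Mathlib

open Matrix

/-- Appendix Lemma 3: Explicit lower bound on the Lyapunov
matrix `Ψ̄`. If `H ⪰ m̲ I`, `k > 0` and `k_p ≥ 2k/m̲`, then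
`Ψ̄ = [[H - (k/k_p) I, H - m̲ I], [H - m̲ I, H]] ⪰ (m̲/8) I`. -/
theorem psi_bar_lower_bound
    (m : ℕ) (H : Matrix (Fin m) (Fin m) ℝ) (mlow k kp : ℝ)
    (hmlow : 0 < mlow) (hH : (H - mlow • 1).PosSemidef)
    (hk : 0 < k) (hkp : 2 * k / mlow ≤ kp) :
    ((Matrix.fromBlocks (H - (k / kp) • 1) (H - mlow • 1) (H - mlow • 1) H
      : Matrix (Fin m ⊕ Fin m) (Fin m ⊕ Fin m) ℝ)
      - (mlow / 8) • 1).PosSemidef := by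
  obtain ⟨L, hL⟩ : ∃ L : Matrix (Fin m) (Fin m) ℝ, H - mlow • 1 = Lᴴ * L := by
    open scoped MatrixOrder in exact CStarAlgebra.nonneg_iff_eq_star_mul_self.mp hH.nonneg
  have hkp0 : 0 < kp := lt_of_lt_of_le (by positivity) hkp
  have hkkp : k / kp ≤ mlow / 2 := by
    rw [div_le_div_iff₀ hkp0 (by norm_num : (0:ℝ) < 2)]
    have h2 : 2 * k ≤ kp * mlow := by
      rw [div_le_iff₀ hmlow] at hkp; linarith
    linarith
  have hc : 0 ≤ 7 * mlow / 8 - k / kp := by linarith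
  have key : ((Matrix.fromBlocks (H - (k / kp) • 1) (H - mlow • 1) (H - mlow • 1) H
      : Matrix (Fin m ⊕ Fin m) (Fin m ⊕ Fin m) ℝ) - (mlow / 8) • 1)
      = (Matrix.fromBlocks L L 0 0)ᴴ * (Matrix.fromBlocks L L 0 0)
        + Matrix.fromBlocks ((7 * mlow / 8 - k / kp) • 1) 0 0 ((7 * mlow / 8) • 1) := by
    rw [fromBlocks_conjTranspose, fromBlocks_multiply, ← fromBlocks_one,
      fromBlocks_smul, sub_eq_add_neg, fromBlocks_neg, fromBlocks_add, fromBlocks_add]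
    rw [fromBlocks_inj]
    refine ⟨?_, ?_, ?_, ?_⟩ <;>
      simp only [Matrix.mul_zero, Matrix.zero_mul, conjTranspose_zero, add_zero,
        zero_add, smul_zero, neg_zero, ← hL] <;> module
  rw [key]
  refine (Matrix.posSemidef_conjTranspose_mul_self _).add ?_
  have : (Matrix.fromBlocks ((7 * mlow / 8 - k / kp) • 1) 0 0 ((7 * mlow / 8) • 1)
      : Matrix (Fin m ⊕ Fin m) (Fin m ⊕ Fin m) ℝ)
      = Matrix.diagonal (Sum.elim (fun _ : Fin m => 7 * mlow / 8 - k / kp)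
          (fun _ : Fin m => 7 * mlow / 8)) := by
    rw [← fromBlocks_diagonal, smul_one_eq_diagonal, smul_one_eq_diagonal]
  rw [this]
  exact Matrix.posSemidef_diagonal_iff.mpr (by rintro (i | i) <;> simpa using by linarith)
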